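/- Let X ⊆ ℓ₂ be a finite-dimensional subspace and let W ⊆ U(ℓ₂) be a symmetric set containing 1 such that every unitary U with U restricted to X equal to the identity lies in W². Then there exists a unitary V such that U(ℓ₂) = W²·V·W²·V*·W². -/

import Mathlib

open Pointwise

open Submodule in
/-- Extend a linear isometric equivalence of a finite-dimensional subspace to the whole
space, acting as the identity on the orthogonal complement. -/
lemma exists_isometryEquiv_of_finDim {H : Type*} [NormedAddCommGroup H]
    [InnerProductSpace ℂ H] (K : Submodule ℂ H) [FiniteDimensional ℂ K]
    (e : K ≃ₗᵢ[ℂ] K) : ∃ T : H ≃ₗᵢ[ℂ] H, ∀ x : K, T x = e x := by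
  haveI : CompleteSpace K := FiniteDimensional.complete ℂ K
  let P := orthogonalProjection K
  let Q := orthogonalProjection Kᗮ
  let M : H →ₗ[ℂ] H := K.subtype ∘ₗ (e.toLinearIsometry.toLinearMap) ∘ₗ (P : H →L[ℂ] K).toLinearMap
      + Kᗮ.subtype ∘ₗ (Q : H →L[ℂ] Kᗮ).toLinearMap
  have hM : ∀ x, M x = ↑(e (P x)) + ↑(Q x) := fun x => rfl
  have hPK : ∀ y : K, P (y : H) = y := fun y => orthogonalProjection_mem_subspace_eq_self y
  have hPKperp : ∀ y : Kᗮ, P (y : H) = 0 := fun y =>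
    orthogonalProjection_mem_subspace_orthogonalComplement_eq_zero y.2
  have hQK : ∀ y : K, Q (y : H) = 0 := fun y =>
    orthogonalProjection_mem_subspace_orthogonalComplement_eq_zero
      (K.le_orthogonal_orthogonal y.2)
  have hQKperp : ∀ y : Kᗮ, Q (y : H) = y := fun y => orthogonalProjection_mem_subspace_eq_self y
  have hsurj : Function.Surjective M := by
    intro x
    refine ⟨↑(e.symm (P x)) + ↑(Q x), ?_⟩
    have h1 : P ((↑(e.symm (P x)) : H) + ↑(Q x)) = e.symm (P x) := by
      rw [map_add, hPK, hPKperp, add_zero]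
    have h2 : Q ((↑(e.symm (P x)) : H) + ↑(Q x)) = Q x := by
      rw [map_add, hQK, hQKperp, zero_add]
    rw [hM, h1, h2, e.apply_symm_apply]
    exact Submodule.starProjection_add_starProjection_orthogonal (K := K) x
  have hnorm : ∀ x, ‖M x‖ = ‖x‖ := by
    intro x
    have horth : @inner ℂ _ _ ((e (P x) : H)) ((Q x : H)) = 0 := (Q x).2 _ (e (P x)).2
    rw [← sq_eq_sq₀ (norm_nonneg _) (norm_nonneg _), hM x, sq, sq,
      norm_add_sq_eq_norm_sq_add_norm_sq_of_inner_eq_zero _ _ horth]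
    have h := norm_sq_eq_add_norm_sq_projection x K
    simp only [sq] at h
    rw [h, Submodule.norm_coe, Submodule.norm_coe, e.norm_map]
  let MLI : H →ₗᵢ[ℂ] H := ⟨M, hnorm⟩
  have hsurj' : Function.Surjective MLI := hsurj
  refine ⟨LinearIsometryEquiv.ofSurjective MLI hsurj', fun x => ?_⟩
  rw [LinearIsometryEquiv.coe_ofSurjective]
  show M ↑x = ↑(e x)
  rw [hM, hPK, hQK, Submodule.coe_zero, add_zero]

open Submodule in
/-- There is a linear isometric equivalence of the whole space carrying any finite
orthonormal family to any other one (of the same index type). -/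
lemma exists_isometryEquiv_map_orthonormal {H : Type*} [NormedAddCommGroup H]
    [InnerProductSpace ℂ H] {ι : Type*} [Fintype ι]
    (u v : ι → H) (hu : Orthonormal ℂ u) (hv : Orthonormal ℂ v) :
    ∃ T : H ≃ₗᵢ[ℂ] H, ∀ i, T (u i) = v i := by
  classical
  set F : Submodule ℂ H := span ℂ (Set.range u ∪ Set.range v) with hF
  haveI : FiniteDimensional ℂ F :=
    FiniteDimensional.span_of_finite ℂ ((Set.finite_range u).union (Set.finite_range v))
  have huF : ∀ i, u i ∈ F := fun i => subset_span (Or.inl (Set.mem_range_self i))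
  have hvF : ∀ i, v i ∈ F := fun i => subset_span (Or.inr (Set.mem_range_self i))
  set uu : ι → F := fun i => ⟨u i, huF i⟩ with huu
  set vv : ι → F := fun i => ⟨v i, hvF i⟩ with hvv
  have huuon : Orthonormal ℂ uu := hu.codRestrict F huF
  have hvvon : Orthonormal ℂ vv := hv.codRestrict F hvF
  have hli : LinearIndependent ℂ uu := huuon.linearIndependent
  set S : Submodule ℂ F := span ℂ (Set.range uu) with hS
  let bS : Module.Basis ι ℂ S := Module.Basis.span hli
  have hbS : ∀ i, (bS i : F) = uu i := fun i => congrArg Subtype.val (Module.Basis.span_apply hli i)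
  have hbSon : Orthonormal ℂ bS := by
    have h := huuon.codRestrict S (fun i => subset_span (Set.mem_range_self i))
    convert h using 1
    funext i
    exact Subtype.ext (hbS i)
  let f : S →ₗ[ℂ] F := bS.constr ℂ vv
  have hf : ∀ i, f (bS i) = vv i := fun i => bS.constr_basis ℂ vv i
  have hfcomp : Orthonormal ℂ (⇑f ∘ ⇑bS) := by
    have : ⇑f ∘ ⇑bS = vv := funext fun i => hf i
    rw [this]; exact hvvon
  let L : S →ₗᵢ[ℂ] F := f.isometryOfOrthonormal hbSon hfcomp
  let Lext : F →ₗᵢ[ℂ] F := L.extend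
  let eF : F ≃ₗᵢ[ℂ] F := Lext.toLinearIsometryEquiv rfl
  obtain ⟨T, hT⟩ := exists_isometryEquiv_of_finDim F eF
  refine ⟨T, fun i => ?_⟩
  have h1 : T (u i) = (eF (uu i) : H) := hT (uu i)
  rw [h1]
  have h2 : eF (uu i) = Lext (uu i) := Lext.toLinearIsometryEquiv_apply rfl (uu i)
  have h3 : (uu i : F) = ((bS i : F)) := (hbS i).symm
  have h4 : Lext (uu i) = L (bS i) := by
    rw [h3]; exact L.extend_apply (bS i)
  rw [h2, h4]
  have h5 : L (bS i) = f (bS i) := rfl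
  rw [h5, hf]

open Submodule in
/-- An infinite-dimensional closed subspace contains orthonormal families of any finite size. -/
lemma exists_orthonormal_in_subspace {H : Type*} [NormedAddCommGroup H]
    [InnerProductSpace ℂ H] [CompleteSpace H] (M : Submodule ℂ H) (hMc : IsClosed (M : Set H))
    (hM : ¬ FiniteDimensional ℂ M) (n : ℕ) :
    ∃ z : Fin n → H, Orthonormal ℂ z ∧ ∀ i, z i ∈ M := by
  haveI : CompleteSpace M := hMc.completeSpace_coe
  obtain ⟨w, b, hb⟩ := exists_hilbertBasis ℂ M
  have hwinf : w.Infinite := by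
    by_contra hfin
    rw [Set.not_infinite] at hfin
    apply hM
    have hd := b.dense_span
    rw [hb, Subtype.range_coe] at hd
    haveI hfd : FiniteDimensional ℂ (span ℂ w) := FiniteDimensional.span_of_finite ℂ hfin
    have hcl : IsClosed ((span ℂ w : Submodule ℂ M) : Set M) :=
      Submodule.closed_of_finiteDimensional _
    have htop : (span ℂ w : Submodule ℂ M) = ⊤ := by
      rw [← hcl.submodule_topologicalClosure_eq]
      exact hd
    rw [htop] at hfd
    exact (Submodule.topEquiv (R := ℂ) (M := M)).finiteDimensional
  let emb : ℕ ↪ w := hwinf.natEmbedding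
  refine ⟨fun i => ((emb i : M) : H), ?_, fun i => ((emb i : M) : M).2⟩
  have hone : Orthonormal ℂ (fun i : Fin n => ((emb (i : ℕ) : w) : M)) := by
    have := b.orthonormal
    rw [show ⇑b = (Subtype.val : w → M) from hb] at this
    exact this.comp (fun i : Fin n => emb (i : ℕ))
      (fun i j hij => Fin.ext (emb.injective (by exact_mod_cast hij)))
  exact hone.comp_linearIsometry M.subtypeₗᵢ

/-- The orthogonal complement of a finite-dimensional subspace of an
infinite-dimensional space is infinite-dimensional. -/
lemma not_finiteDimensional_orthogonal {H : Type*} [NormedAddCommGroup H]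
    [InnerProductSpace ℂ H] (hH : ¬ FiniteDimensional ℂ H)
    (F : Submodule ℂ H) [FiniteDimensional ℂ F] : ¬ FiniteDimensional ℂ Fᗮ := by
  intro h
  haveI : CompleteSpace F := FiniteDimensional.complete ℂ F
  have htop : F ⊔ Fᗮ = ⊤ := Submodule.sup_orthogonal_of_hasOrthogonalProjection
  haveI : FiniteDimensional ℂ (F ⊔ Fᗮ : Submodule ℂ H) := Submodule.finiteDimensional_sup F Fᗮ
  rw [htop] at this
  exact hH ((Submodule.topEquiv (R := ℂ) (M := H)).finiteDimensional)

/-- Two orthonormal families with mutually orthogonal members combine into an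
orthonormal family indexed by the sum type. -/
lemma orthonormal_sum_elim {H : Type*} [NormedAddCommGroup H] [InnerProductSpace ℂ H]
    {n m : ℕ} {u : Fin n → H} {v : Fin m → H}
    (hu : Orthonormal ℂ u) (hv : Orthonormal ℂ v)
    (h : ∀ i j, @inner ℂ _ _ (u i) (v j) = 0) : Orthonormal ℂ (Sum.elim u v) := by
  constructor
  · rintro (i | i)
    · exact hu.1 i
    · exact hv.1 i
  · rintro (i | i) (j | j) hij
    · exact hu.2 (by simpa using hij)
    · exact h i j
    · exact inner_eq_zero_symm.mpr (h j i)
    · exact hv.2 (by simpa using hij)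

theorem univ_eq_W2VW2VW2
    (H : Type*) [NormedAddCommGroup H] [InnerProductSpace ℂ H] [CompleteSpace H]
    [TopologicalSpace.SeparableSpace H] (hH : ¬ FiniteDimensional ℂ H)
    (X : Submodule ℂ H) (hX : FiniteDimensional ℂ X)
    (W : Set (unitary (H →L[ℂ] H)))
    (hWone : (1 : unitary (H →L[ℂ] H)) ∈ W) (hWsymm : W⁻¹ = W)
    (hW : ∀ U : unitary (H →L[ℂ] H),
      (∀ x ∈ X, (U : H →L[ℂ] H) x = x) → U ∈ W ^ 2) :
    ∃ V : unitary (H →L[ℂ] H),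
      W ^ 2 * {V} * W ^ 2 * {V⁻¹} * W ^ 2 = Set.univ := by
  haveI := hX
  classical
  set n := Module.finrank ℂ X with hn
  set b := stdOrthonormalBasis ℂ X with hb
  set ux : Fin n → H := fun i => (b i : H) with hux
  have huxon : Orthonormal ℂ ux := b.orthonormal.comp_linearIsometry X.subtypeₗᵢ
  have huxX : ∀ i, ux i ∈ X := fun i => (b i).2
  have hXspan : Submodule.span ℂ (Set.range ux) = X := by
    have hr : Set.range ux = X.subtype '' Set.range ⇑(b.toBasis) := by
      rw [← Set.range_comp, b.coe_toBasis]
      rfl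
    rw [hr, Submodule.span_image, b.toBasis.span_eq, Submodule.map_subtype_top]
  -- a fixed orthonormal family in Xᗮ
  obtain ⟨u', hu'on, hu'mem⟩ := exists_orthonormal_in_subspace Xᗮ
    (Submodule.isClosed_orthogonal X) (not_finiteDimensional_orthogonal hH X) n
  have c1 : ∀ i j, @inner ℂ _ _ (ux i) (u' j) = 0 := fun i j =>
    (Submodule.mem_orthogonal X (u' j)).mp (hu'mem j) (ux i) (huxX i)
  -- the unitary V
  obtain ⟨T₁, hT₁⟩ := exists_isometryEquiv_map_orthonormal ux u' huxon hu'on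
  set Φ := (Unitary.linearIsometryEquiv (𝕜 := ℂ) (H := H)).symm with hΦ
  have coeΦ : ∀ (T : H ≃ₗᵢ[ℂ] H) (x : H), ((Φ T : unitary (H →L[ℂ] H)) : H →L[ℂ] H) x = T x :=
    fun T x => rfl
  have coeΦinv : ∀ (T : H ≃ₗᵢ[ℂ] H) (x : H),
      (((Φ T)⁻¹ : unitary (H →L[ℂ] H)) : H →L[ℂ] H) x = T.symm x := by
    intro T x
    rw [← map_inv Φ T]
    exact coeΦ T⁻¹ x
  set Vu : unitary (H →L[ℂ] H) := Φ T₁ with hVu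
  refine ⟨Vu, Set.eq_univ_iff_forall.mpr fun U => ?_⟩
  -- now decompose an arbitrary unitary U
  set Uc : H →L[ℂ] H := (U : H →L[ℂ] H) with hUc
  set Ustar : H →L[ℂ] H := ContinuousLinearMap.adjoint Uc with hUstar
  set F2 : Submodule ℂ H := X ⊔ X.map (Ustar : H →ₗ[ℂ] H) with hF2
  haveI : FiniteDimensional ℂ (X.map (Ustar : H →ₗ[ℂ] H)) := Module.Finite.map X (Ustar : H →ₗ[ℂ] H)
  haveI : FiniteDimensional ℂ F2 := Submodule.finiteDimensional_sup _ _
  obtain ⟨z, hzon, hzmem⟩ := exists_orthonormal_in_subspace F2ᗮ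
    (Submodule.isClosed_orthogonal F2) (not_finiteDimensional_orthogonal hH F2) n
  set w : Fin n → H := fun i => Uc (z i) with hw
  have hwon : Orthonormal ℂ w := by
    constructor
    · intro i
      rw [hw]
      rw [Uc.norm_map_of_mem_unitary U.2]
      exact hzon.1 i
    · intro i j hij
      rw [hw]
      simp only []
      rw [Uc.inner_map_map_of_mem_unitary U.2]
      exact hzon.2 hij
  have c2 : ∀ i j, @inner ℂ _ _ (ux i) (z j) = 0 := fun i j =>
    (Submodule.mem_orthogonal F2 (z j)).mp (hzmem j) (ux i) (le_sup_left (a := X) (huxX i))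
  have c3 : ∀ i j, @inner ℂ _ _ (ux i) (w j) = 0 := by
    intro i j
    rw [hw]
    simp only []
    rw [← ContinuousLinearMap.adjoint_inner_left Uc (z j) (ux i)]
    exact (Submodule.mem_orthogonal F2 (z j)).mp (hzmem j) _
      (le_sup_right (a := X) (Submodule.mem_map_of_mem (huxX i)))
  obtain ⟨T₂, hT₂⟩ := exists_isometryEquiv_map_orthonormal
    (Sum.elim ux u') (Sum.elim ux z)
    (orthonormal_sum_elim huxon hu'on c1) (orthonormal_sum_elim huxon hzon c2)
  obtain ⟨T₃, hT₃⟩ := exists_isometryEquiv_map_orthonormal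
    (Sum.elim ux u') (Sum.elim ux w)
    (orthonormal_sum_elim huxon hu'on c1) (orthonormal_sum_elim huxon hwon c3)
  have hT₂l : ∀ i, T₂ (ux i) = ux i := fun i => by simpa using hT₂ (Sum.inl i)
  have hT₂r : ∀ i, T₂ (u' i) = z i := fun i => by simpa using hT₂ (Sum.inr i)
  have hT₃l : ∀ i, T₃ (ux i) = ux i := fun i => by simpa using hT₃ (Sum.inl i)
  have hT₃r : ∀ i, T₃ (u' i) = w i := fun i => by simpa using hT₃ (Sum.inr i)
  set Cu : unitary (H →L[ℂ] H) := Φ T₂ with hCu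
  set Au : unitary (H →L[ℂ] H) := Φ T₃ with hAu
  set B : unitary (H →L[ℂ] H) := Vu⁻¹ * Au⁻¹ * U * Cu * Vu with hB
  -- a unitary fixing all the `ux i` fixes `X` pointwise
  have fix_of_gen : ∀ S : unitary (H →L[ℂ] H),
      (∀ i, (S : H →L[ℂ] H) (ux i) = ux i) → ∀ x ∈ X, (S : H →L[ℂ] H) x = x := by
    intro S hS x hx
    have heq : Set.EqOn (⇑(S : H →L[ℂ] H)) (⇑(ContinuousLinearMap.id ℂ H)) (Set.range ux) := by
      rintro y ⟨i, rfl⟩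
      exact hS i
    have hx' : x ∈ Submodule.span ℂ (Set.range ux) := hXspan ▸ hx
    exact LinearMap.eqOn_span heq hx'
  have hAfix : ∀ x ∈ X, ((Au : H →L[ℂ] H)) x = x :=
    fix_of_gen Au fun i => (coeΦ T₃ _).trans (hT₃l i)
  have hCfix : ∀ x ∈ X, ((Cu⁻¹ : unitary (H →L[ℂ] H)) : H →L[ℂ] H) x = x :=
    fix_of_gen Cu⁻¹ fun i => (coeΦinv T₂ _).trans
      (T₂.symm_apply_eq.mpr (hT₂l i).symm)
  have hBfix : ∀ x ∈ X, ((B : H →L[ℂ] H)) x = x := by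
    refine fix_of_gen B fun i => ?_
    have hstep : ((B : H →L[ℂ] H)) (ux i)
        = ((Vu⁻¹ : unitary (H →L[ℂ] H)) : H →L[ℂ] H)
          (((Au⁻¹ : unitary (H →L[ℂ] H)) : H →L[ℂ] H)
            (Uc (((Cu : unitary (H →L[ℂ] H)) : H →L[ℂ] H)
              (((Vu : unitary (H →L[ℂ] H)) : H →L[ℂ] H) (ux i))))) := rfl
    rw [hstep, coeΦ T₁, hT₁ i, coeΦ T₂, hT₂r i]
    have h4 : ((Au⁻¹ : unitary (H →L[ℂ] H)) : H →L[ℂ] H) (Uc (z i)) = u' i := by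
      rw [coeΦinv T₃]
      exact T₃.symm_apply_eq.mpr (hT₃r i).symm
    rw [h4, coeΦinv T₁]
    exact T₁.symm_apply_eq.mpr (hT₁ i).symm
  have hdecomp : U = Au * Vu * B * Vu⁻¹ * Cu⁻¹ := by
    rw [hB]
    group
  rw [hdecomp]
  exact Set.mul_mem_mul (Set.mul_mem_mul (Set.mul_mem_mul
    (Set.mul_mem_mul (hW Au hAfix) (Set.mem_singleton _)) (hW B hBfix))
    (Set.mem_singleton _)) (hW Cu⁻¹ hCfix)
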